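/- If the system has a GED on J with data (K, λ₊, λ₋, P_n^±) and also a GED on J with data (K̃, λ₊, λ₋, P̃_n^±) with the same rates, then for all n ∈ J: ‖P_n^+ − P̃_n^+‖ ≤ K² (λ₊/λ₋)^{n−n₋} ‖P_{n₋}^+ − P̃_{n₋}^+‖; in particular P_n^+ − P̃_n^+ → 0 as n → ∞. -/

import Mathlib

open scoped RealInnerProductSpace ENNReal
open Filter

noncomputable section

set_option maxHeartbeats 1000000
set_option synthInstance.maxHeartbeats 1000000


/-- `d`-dimensional Euclidean space `ℝ^d`. -/
abbrev Euc (d : ℕ) := EuclideanSpace ℝ (Fin d)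

/-- Bounded linear operators on `ℝ^d` (i.e. `d × d` matrices, with the operator norm). -/
abbrev Op (d : ℕ) := Euc d →L[ℝ] Euc d

/-- The maximal principal angle between two subspaces of `ℝ^d`,
`∠(V,W) = arccos( min_{v ∈ V, ‖v‖=1} max_{w ∈ W, ‖w‖=1} vᵀw )`. -/
def subAngle {d : ℕ} (V W : Submodule ℝ (Euc d)) : ℝ :=
  Real.arccos (sInf {x : ℝ | ∃ v ∈ V, ‖v‖ = 1 ∧
    x = sSup {y : ℝ | ∃ w ∈ W, ‖w‖ = 1 ∧ y = ⟪v, w⟫}})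

/-- `Φ` is the solution operator of `u_{n+1} = A_n u_n` on `J = {n ∈ ℤ : n ≥ n₀}`:
`Φ(n,n) = I` and `Φ(n+1,m) = A_n Φ(n,m)` (for invertible `A_n` this uniquely
determines `Φ(n,m)` for all `n, m ∈ J`, forward and backward). -/
def IsSolOp {d : ℕ} (n₀ : ℤ) (A : ℤ → Op d) (Φ : ℤ → ℤ → Op d) : Prop :=
  (∀ n : ℤ, n₀ ≤ n → Φ n n = 1) ∧
  (∀ n m : ℤ, n₀ ≤ n → n₀ ≤ m → Φ (n + 1) m = (A n).comp (Φ n m))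

/-- The rate `λ^k` of a generalized exponential dichotomy, with the conventions
`0^k = 0` (used for `k ≥ 0`) and `∞^k = 0` (used for `k ≤ 0`). -/
def dichPow (lam : ℝ≥0∞) (k : ℤ) : ℝ≥0∞ :=
  if lam = 0 ∨ lam = ⊤ then 0 else lam ^ k

/-- Generalized exponential dichotomy (GED) on `J = {n ∈ ℤ : n ≥ n₀}` with data
`(K, λ₊, λ₋, P_n^±)`, where `P_n^- = 1 - P_n^+`: rates `0 ≤ λ₊ < λ₋ ≤ ∞` (the
pair `(0,∞)` excluded), invariant projectors, and the estimates
`‖Φ(n,m)P_m^+‖ ≤ K λ₊^{n−m}` for `n ≥ m`, `‖Φ(n,m)P_m^-‖ ≤ K λ₋^{n−m}` for `n ≤ m`. -/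
def GED {d : ℕ} (n₀ : ℤ) (Φ : ℤ → ℤ → Op d) (K : ℝ) (lamP lamM : ℝ≥0∞)
    (P : ℤ → Op d) : Prop :=
  0 < K ∧ lamP < lamM ∧ ¬(lamP = 0 ∧ lamM = ⊤) ∧
  (∀ n : ℤ, n₀ ≤ n → (P n).comp (P n) = P n) ∧
  (∀ n m : ℤ, n₀ ≤ n → n₀ ≤ m → (P n).comp (Φ n m) = (Φ n m).comp (P m)) ∧
  (∀ n m : ℤ, n₀ ≤ m → m ≤ n →
    (‖(Φ n m).comp (P m)‖₊ : ℝ≥0∞) ≤ ENNReal.ofReal K * dichPow lamP (n - m)) ∧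
  (∀ n m : ℤ, n₀ ≤ n → n ≤ m →
    (‖(Φ n m).comp (1 - P m)‖₊ : ℝ≥0∞) ≤ ENNReal.ofReal K * dichPow lamM (n - m))

namespace S5

variable {d : ℕ}

lemma comp_eq_mul (a b : Op d) : a.comp b = a * b := rfl

lemma rec_unique (n₀ : ℤ) (A : ℤ → Op d) (hA : ∀ n : ℤ, n₀ ≤ n → IsUnit (A n))
    (f g : ℤ → Op d) (m : ℤ) (hm : n₀ ≤ m) (hfg : f m = g m)
    (hf : ∀ n : ℤ, n₀ ≤ n → f (n + 1) = A n * f n)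
    (hg : ∀ n : ℤ, n₀ ≤ n → g (n + 1) = A n * g n) :
    ∀ n : ℤ, n₀ ≤ n → f n = g n := by
  have up : ∀ n : ℤ, m ≤ n → f n = g n := by
    refine Int.le_induction hfg (fun k hk ih => ?_)
    have hk0 : n₀ ≤ k := hm.trans hk
    rw [hf k hk0, hg k hk0, ih]
  have down : ∀ n : ℤ, n ≤ m → n₀ ≤ n → f n = g n := by
    refine Int.le_induction_down (fun _ => hfg) (fun k hk ih hk1 => ?_)
    have hstep : f ((k - 1) + 1) = g ((k - 1) + 1) := by
      by_cases hkm : k ≤ m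
      · simpa using ih (by omega)
      · simpa using up k (by omega)
    rw [hf (k - 1) hk1, hg (k - 1) hk1] at hstep
    exact (hA (k - 1) hk1).mul_left_cancel hstep
  intro n hn
  rcases le_total m n with h | h
  · exact up n h
  · exact down n h hn

lemma cocycle {n₀ : ℤ} {A : ℤ → Op d} {Φ : ℤ → ℤ → Op d}
    (hA : ∀ n : ℤ, n₀ ≤ n → IsUnit (A n)) (hΦ : IsSolOp n₀ A Φ)
    {n m k : ℤ} (hn : n₀ ≤ n) (hm : n₀ ≤ m) (hk : n₀ ≤ k) :
    Φ n m * Φ m k = Φ n k := by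
  refine rec_unique n₀ A hA (fun j => Φ j m * Φ m k) (fun j => Φ j k) m hm ?_ ?_ ?_ n hn
  · show Φ m m * Φ m k = Φ m k
    rw [hΦ.1 m hm, one_mul]
  · intro j hj
    simp only [hΦ.2 j m hj hm, comp_eq_mul, mul_assoc]
  · intro j hj
    simp only [hΦ.2 j k hj hk, comp_eq_mul]

lemma Phi_inv {n₀ : ℤ} {A : ℤ → Op d} {Φ : ℤ → ℤ → Op d}
    (hA : ∀ n : ℤ, n₀ ≤ n → IsUnit (A n)) (hΦ : IsSolOp n₀ A Φ)
    {n m : ℤ} (hn : n₀ ≤ n) (hm : n₀ ≤ m) :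
    Φ n m * Φ m n = 1 := by
  rw [cocycle hA hΦ hn hm hn, hΦ.1 n hn]

lemma dichPow_ne_top (lam : ℝ≥0∞) (k : ℤ) : dichPow lam k ≠ ⊤ := by
  unfold dichPow
  split
  · simp
  · next h =>
      push_neg at h
      exact (ENNReal.zpow_lt_top h.1 h.2 k).ne

lemma norm_le_of_nnnorm_le {X : Op d} {K : ℝ} (hK : 0 ≤ K) {D : ℝ≥0∞}
    (h : (‖X‖₊ : ℝ≥0∞) ≤ ENNReal.ofReal K * D) (hD : D ≠ ⊤) :
    ‖X‖ ≤ K * D.toReal := by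
  have h2 := ENNReal.toReal_mono (by
    exact ENNReal.mul_ne_top ENNReal.ofReal_ne_top hD) h
  simpa [ENNReal.toReal_mul, ENNReal.toReal_ofReal hK] using h2

end S5
namespace S5

variable {d : ℕ}

lemma dich_ratio (lamP lamM : ℝ≥0∞) (hlt : lamP < lamM) (k : ℕ) :
    dichPow lamP (k : ℤ) * dichPow lamM (-(k : ℤ)) ≤ (lamP / lamM) ^ k := by
  have hPtop : lamP ≠ ⊤ := hlt.ne_top
  have hM0 : lamM ≠ 0 := (lt_of_le_of_lt (zero_le : 0 ≤ lamP) hlt).ne'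
  by_cases h0 : lamP = 0
  · unfold dichPow
    rw [if_pos (Or.inl h0), zero_mul]
    exact zero_le
  by_cases ht : lamM = ⊤
  · unfold dichPow
    rw [if_pos (Or.inr ht), mul_zero]
    exact zero_le
  · unfold dichPow
    rw [if_neg (by tauto), if_neg (by tauto), zpow_natCast,
      ENNReal.zpow_neg lamM, zpow_natCast, div_eq_mul_inv, mul_pow,
      ENNReal.inv_pow]

lemma mixed_zero {n₀ : ℤ} {A : ℤ → Op d} {Φ : ℤ → ℤ → Op d}
    (hA : ∀ n : ℤ, n₀ ≤ n → IsUnit (A n)) (hΦ : IsSolOp n₀ A Φ)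
    {K Kt : ℝ} {lamP lamM : ℝ≥0∞} {P Pt : ℤ → Op d}
    (hG : GED n₀ Φ K lamP lamM P) (hGt : GED n₀ Φ Kt lamP lamM Pt) :
    ∀ n : ℤ, n₀ ≤ n → (1 - P n) * Pt n = 0 := by
  obtain ⟨hK, hlt, hne, hidem, hcomm, hP, hQ⟩ := hG
  obtain ⟨hKt, -, -, hidemt, hcommt, hPt, hQt⟩ := hGt
  intro n hn
  have hfact : ∀ m : ℤ, n ≤ m →
      (1 - P n) * Pt n = (Φ n m * (1 - P m)) * (Φ m n * Pt n) := by
    intro m hnm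
    have hm : n₀ ≤ m := hn.trans hnm
    have hone : Φ n m * Φ m n = 1 := Phi_inv hA hΦ hn hm
    have hcomm1 : (1 - P n) * Φ n m = Φ n m * (1 - P m) := by
      have hc := hcomm n m hn hm
      simp only [comp_eq_mul] at hc
      simp [sub_mul, mul_sub, hc]
    calc (1 - P n) * Pt n = ((1 - P n) * (Φ n m * Φ m n)) * Pt n := by
          rw [hone, mul_one]
      _ = (Φ n m * (1 - P m)) * (Φ m n * Pt n) := by
          rw [← mul_assoc, hcomm1, mul_assoc, mul_assoc]
  have hbR : ∀ k : ℕ, ‖(1 - P n) * Pt n‖ ≤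
      (K * (dichPow lamM (n - (n + k))).toReal) *
        (Kt * (dichPow lamP ((n + k) - n)).toReal) := by
    intro k
    have h1 : ‖Φ n (n + k) * (1 - P (n + k))‖ ≤
        K * (dichPow lamM (n - (n + k))).toReal :=
      norm_le_of_nnnorm_le hK.le
        (by simpa only [comp_eq_mul] using hQ n (n + k) hn (by omega))
        (dichPow_ne_top _ _)
    have h2 : ‖Φ (n + k) n * Pt n‖ ≤ Kt * (dichPow lamP ((n + k) - n)).toReal :=
      norm_le_of_nnnorm_le hKt.le
        (by simpa only [comp_eq_mul] using hPt (n + k) n hn (by omega))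
        (dichPow_ne_top _ _)
    rw [hfact (n + k) (by omega)]
    exact (norm_mul_le _ _).trans
      (mul_le_mul h1 h2 (norm_nonneg _) (by positivity))
  by_cases h0 : lamP = 0
  · have hb := hbR 1
    simp [dichPow, h0] at hb
    exact hb
  by_cases ht : lamM = ⊤
  · have hb := hbR 0
    simp [dichPow, ht] at hb
    exact hb
  · have hPtop : lamP ≠ ⊤ := hlt.ne_top
    have hM0 : lamM ≠ 0 := (lt_of_le_of_lt (zero_le : 0 ≤ lamP) hlt).ne'
    set a := lamP.toReal with hadef
    set b := lamM.toReal with hbdef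
    have hb : 0 < b := ENNReal.toReal_pos hM0 ht
    have ha : 0 ≤ a := ENNReal.toReal_nonneg
    have hab : a < b := (ENNReal.toReal_lt_toReal hPtop ht).mpr hlt
    have key : ∀ k : ℕ, ‖(1 - P n) * Pt n‖ ≤ (K * Kt) * (a / b) ^ k := by
      intro k
      refine (hbR k).trans_eq ?_
      have e1 : dichPow lamM (n - (n + k)) = (lamM ^ k)⁻¹ := by
        unfold dichPow
        rw [if_neg (by tauto)]
        have e : (n - (n + (k : ℤ))) = -(k : ℤ) := by ring
        rw [e, ENNReal.zpow_neg lamM, zpow_natCast]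
      have e2 : dichPow lamP ((n + k) - n) = lamP ^ k := by
        unfold dichPow
        rw [if_neg (by tauto)]
        have e : ((n + (k : ℤ)) - n) = (k : ℤ) := by ring
        rw [e, zpow_natCast]
      rw [e1, e2, ENNReal.toReal_inv, ENNReal.toReal_pow, ENNReal.toReal_pow,
        div_pow]
      rw [← hadef, ← hbdef]
      field_simp
    have hr1 : a / b < 1 := (div_lt_one hb).mpr hab
    have hr0 : 0 ≤ a / b := by positivity
    have htend : Tendsto (fun k : ℕ => (K * Kt) * (a / b) ^ k) atTop (nhds 0) := by
      simpa using
        (tendsto_pow_atTop_nhds_zero_of_lt_one hr0 hr1).const_mul (K * Kt)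
    have hle : ‖(1 - P n) * Pt n‖ ≤ 0 := ge_of_tendsto' htend key
    exact norm_le_zero_iff.mp hle

end S5

/-- two GEDs with the same rates have exponentially close projectors,
`‖P_n^+ − P̃_n^+‖ ≤ K² (λ₊/λ₋)^{n−n₋} ‖P_{n₋}^+ − P̃_{n₋}^+‖` for `n ∈ J`;
in particular `P_n^+ − P̃_n^+ → 0` as `n → ∞`. -/
theorem statement5 {d : ℕ} (n₀ : ℤ) (A : ℤ → Op d) (Φ : ℤ → ℤ → Op d)
    (hA : ∀ n : ℤ, n₀ ≤ n → IsUnit (A n))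
    (hAbd : ∃ M : ℝ, ∀ n : ℤ, n₀ ≤ n → ‖A n‖ ≤ M ∧ ‖Ring.inverse (A n)‖ ≤ M)
    (hΦ : IsSolOp n₀ A Φ)
    (K Kt : ℝ) (lamP lamM : ℝ≥0∞) (P Pt : ℤ → Op d)
    (hGED : GED n₀ Φ K lamP lamM P)
    (hGEDt : GED n₀ Φ Kt lamP lamM Pt) :
    (∀ n : ℤ, n₀ ≤ n →
      ‖P n - Pt n‖ ≤
        K ^ 2 * ((lamP / lamM) ^ (n - n₀).toNat).toReal * ‖P n₀ - Pt n₀‖) ∧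
    Tendsto (fun n : ℤ => P n - Pt n) atTop (nhds 0) := by
  have hz1 : ∀ n : ℤ, n₀ ≤ n → (1 - P n) * Pt n = 0 :=
    S5.mixed_zero hA hΦ hGED hGEDt
  have hz2 : ∀ n : ℤ, n₀ ≤ n → (1 - Pt n) * P n = 0 :=
    S5.mixed_zero hA hΦ hGEDt hGED
  obtain ⟨hK, hlt, hne, hidem, hcomm, hP, hQ⟩ := hGED
  have hPtop : lamP ≠ ⊤ := hlt.ne_top
  have hM0 : lamM ≠ 0 := (lt_of_le_of_lt (zero_le : 0 ≤ lamP) hlt).ne'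
  have hrne : ∀ k : ℕ, (lamP / lamM) ^ k ≠ ⊤ :=
    fun k => ENNReal.pow_ne_top (ENNReal.div_lt_top hPtop hM0).ne
  -- algebraic identities at n₀
  have e1 : P n₀ * Pt n₀ = Pt n₀ := by
    have := hz1 n₀ le_rfl
    rw [sub_mul, one_mul, sub_eq_zero] at this
    exact this.symm
  have e2 : Pt n₀ * P n₀ = P n₀ := by
    have := hz2 n₀ le_rfl
    rw [sub_mul, one_mul, sub_eq_zero] at this
    exact this.symm
  have idem0 : P n₀ * P n₀ = P n₀ := by
    simpa only [S5.comp_eq_mul] using hidem n₀ le_rfl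
  have s1 : P n₀ * (P n₀ - Pt n₀) = P n₀ - Pt n₀ := by
    rw [mul_sub, idem0, e1]
  have s2 : (P n₀ - Pt n₀) * (1 - P n₀) = P n₀ - Pt n₀ := by
    rw [mul_sub, mul_one, sub_mul, idem0, e2, sub_self, sub_zero]
  -- key factorization for each n ≥ n₀
  have part1 : ∀ n : ℤ, n₀ ≤ n →
      ‖P n - Pt n‖ ≤
        K ^ 2 * ((lamP / lamM) ^ (n - n₀).toNat).toReal * ‖P n₀ - Pt n₀‖ := by
    intro n hn
    have hone : Φ n n₀ * Φ n₀ n = 1 := S5.Phi_inv hA hΦ hn le_rfl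
    have hcP : P n * Φ n n₀ = Φ n n₀ * P n₀ := by
      simpa only [S5.comp_eq_mul] using hcomm n n₀ hn le_rfl
    have hcPt : Pt n * Φ n n₀ = Φ n n₀ * Pt n₀ := by
      simpa only [S5.comp_eq_mul] using hGEDt.2.2.2.2.1 n n₀ hn le_rfl
    have cP : Φ n n₀ * P n₀ * Φ n₀ n = P n := by
      rw [← hcP, mul_assoc, hone, mul_one]
    have cPt : Φ n n₀ * Pt n₀ * Φ n₀ n = Pt n := by
      rw [← hcPt, mul_assoc, hone, mul_one]
    have w1 : Φ n₀ n * (1 - P n) = (1 - P n₀) * Φ n₀ n := by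
      have hc : P n₀ * Φ n₀ n = Φ n₀ n * P n := by
        simpa only [S5.comp_eq_mul] using hcomm n₀ n le_rfl hn
      simp [sub_mul, mul_sub, hc]
    have conj : P n - Pt n =
        (Φ n n₀ * P n₀) * ((P n₀ - Pt n₀) * (Φ n₀ n * (1 - P n))) := by
      rw [w1, ← mul_assoc (P n₀ - Pt n₀), s2]
      calc P n - Pt n = Φ n n₀ * (P n₀ - Pt n₀) * Φ n₀ n := by
            rw [mul_sub, sub_mul, cP, cPt]
        _ = Φ n n₀ * (P n₀ * (P n₀ - Pt n₀)) * Φ n₀ n := by rw [s1]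
        _ = (Φ n n₀ * P n₀) * ((P n₀ - Pt n₀) * Φ n₀ n) := by
            rw [← mul_assoc, mul_assoc (Φ n n₀ * P n₀)]
      -- done?
    have bound1 : ‖Φ n n₀ * P n₀‖ ≤ K * (dichPow lamP (n - n₀)).toReal :=
      S5.norm_le_of_nnnorm_le hK.le
        (by simpa only [S5.comp_eq_mul] using hP n n₀ le_rfl hn)
        (S5.dichPow_ne_top _ _)
    have bound2 : ‖Φ n₀ n * (1 - P n)‖ ≤ K * (dichPow lamM (n₀ - n)).toReal :=
      S5.norm_le_of_nnnorm_le hK.le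
        (by simpa only [S5.comp_eq_mul] using hQ n₀ n le_rfl hn)
        (S5.dichPow_ne_top _ _)
    have ratio : (dichPow lamP (n - n₀)).toReal * (dichPow lamM (n₀ - n)).toReal
        ≤ ((lamP / lamM) ^ (n - n₀).toNat).toReal := by
      rw [← ENNReal.toReal_mul]
      apply ENNReal.toReal_mono (hrne _)
      have hk : (n - n₀) = ((n - n₀).toNat : ℤ) := by omega
      have hk' : (n₀ - n) = -((n - n₀).toNat : ℤ) := by omega
      rw [hk, hk']
      exact S5.dich_ratio lamP lamM hlt _
    calc ‖P n - Pt n‖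
        = ‖(Φ n n₀ * P n₀) * ((P n₀ - Pt n₀) * (Φ n₀ n * (1 - P n)))‖ := by
          rw [← conj]
      _ ≤ ‖Φ n n₀ * P n₀‖ * (‖P n₀ - Pt n₀‖ * ‖Φ n₀ n * (1 - P n)‖) :=
          (norm_mul_le _ _).trans
            (mul_le_mul_of_nonneg_left (norm_mul_le _ _) (norm_nonneg _))
      _ ≤ (K * (dichPow lamP (n - n₀)).toReal) *
            (‖P n₀ - Pt n₀‖ * (K * (dichPow lamM (n₀ - n)).toReal)) := by
          apply mul_le_mul bound1 _ (by positivity) (by positivity)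
          exact mul_le_mul_of_nonneg_left bound2 (norm_nonneg _)
      _ = K ^ 2 * ((dichPow lamP (n - n₀)).toReal *
            (dichPow lamM (n₀ - n)).toReal) * ‖P n₀ - Pt n₀‖ := by ring
      _ ≤ K ^ 2 * ((lamP / lamM) ^ (n - n₀).toNat).toReal * ‖P n₀ - Pt n₀‖ := by
          apply mul_le_mul_of_nonneg_right _ (norm_nonneg _)
          exact mul_le_mul_of_nonneg_left ratio (by positivity)
  refine ⟨part1, ?_⟩
  set r := (lamP / lamM).toReal with hr
  have hr0 : 0 ≤ r := ENNReal.toReal_nonneg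
  have hr1 : r < 1 := by
    by_cases ht : lamM = ⊤
    · rw [hr, ht, ENNReal.div_top]
      norm_num
    · have hdlt : lamP / lamM < 1 := by
        rw [ENNReal.div_lt_iff (Or.inl hM0) (Or.inl ht), one_mul]
        exact hlt
      have h2 := (ENNReal.toReal_lt_toReal (ENNReal.div_lt_top hPtop hM0).ne
        ENNReal.one_ne_top).mpr hdlt
      rw [ENNReal.toReal_one] at h2
      exact h2
  have htoNat : Tendsto (fun n : ℤ => (n - n₀).toNat) atTop atTop :=
    tendsto_atTop_atTop.mpr fun b => ⟨n₀ + b, fun a ha => by omega⟩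
  have htend : Tendsto
      (fun n : ℤ => (K ^ 2 * ‖P n₀ - Pt n₀‖) * r ^ (n - n₀).toNat)
      atTop (nhds 0) := by
    have h1 := (tendsto_pow_atTop_nhds_zero_of_lt_one hr0 hr1).comp htoNat
    simpa using h1.const_mul (K ^ 2 * ‖P n₀ - Pt n₀‖)
  apply squeeze_zero_norm' _ htend
  filter_upwards [eventually_ge_atTop n₀] with n hn
  calc ‖P n - Pt n‖
      ≤ K ^ 2 * ((lamP / lamM) ^ (n - n₀).toNat).toReal * ‖P n₀ - Pt n₀‖ :=
        part1 n hn
    _ = (K ^ 2 * ‖P n₀ - Pt n₀‖) * r ^ (n - n₀).toNat := by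
        rw [hr, ENNReal.toReal_pow]
        ring
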